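/- Let l, m be nonnegative integers with m ≥ 1, let A be a real N × N matrix, let u : ℝ → ℝ^N be infinitely differentiable, and let x : ℝ → ℝ^N be infinitely differentiable with x′(t) = A · x(t) + u(t) for all t. Fix t_{n−1} ∈ ℝ. For each h > 0, suppose vectors x̂^{(0)}(h), …, x̂^{(m)}(h) ∈ ℝ^N satisfy the derivative-chain relations x̂^{(i+1)}(h) = A · x̂^{(i)}(h) + u^{(i)}(t_{n−1} + h) for i = 0, …, m−1, together with the Obreshkov closure Σ_{i=0}^{m} (−1)^i · α_{i,l,m} · h^i · x̂^{(i)}(h) = Σ_{i=0}^{l} α_{i,m,l} · h^i · x^{(i)}(t_{n−1}). Then for each i with 0 ≤ i ≤ m, h^i · (x̂^{(i)}(h) − x^{(i)}(t_{n−1} + h)) = O(h^{l+m+1+i}) as h → 0⁺. -/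

import Mathlib

/-- The Obreshkov coefficient `α_{i,l,m} = ((m+l−i)! / (m+l)!) · binom(m, i)`. -/
noncomputable def obreshkovAlpha (i l m : ℕ) : ℝ :=
  (Nat.factorial (m + l - i) : ℝ) / (Nat.factorial (m + l)) * (Nat.choose m i)

open Finset

/-- `(j+1)! * C(m,j+1) = (m-j) * j! * C(m,j)` over ℝ. -/
lemma fact_choose_succ (m j : ℕ) :
    ((Nat.factorial (j+1) : ℝ)) * (Nat.choose m (j+1))
      = ((m : ℝ) - j) * (Nat.factorial j) * (Nat.choose m j) := by
  rcases lt_or_ge j m with hj | hj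
  · have h := Nat.choose_succ_right_eq m j
    have hcast := congrArg (Nat.cast : ℕ → ℝ) h
    push_cast [Nat.cast_sub hj.le] at hcast
    rw [Nat.factorial_succ]
    push_cast
    nlinarith [hcast]
  · rcases eq_or_lt_of_le hj with rfl | hj'
    · simp [Nat.choose_succ_self, Nat.choose_self]
    · simp [Nat.choose_eq_zero_of_lt hj', Nat.choose_eq_zero_of_lt (Nat.lt_succ_of_lt hj')]

noncomputable def Vsum (m k p : ℕ) : ℝ :=
  ∑ i ∈ range (k+1), (-1 : ℝ)^i * (Nat.factorial i) * (Nat.choose m i) *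
    (Nat.choose k i) * (Nat.factorial (p - i))

lemma Vsum_zero (m p : ℕ) : Vsum m 0 p = Nat.factorial p := by
  simp [Vsum]

lemma Vsum_rec (m k p : ℕ) (hmp : m ≤ p) (hk : k < m ∨ m < p) :
    Vsum m (k+1) p = ((p : ℝ) - m) * Vsum m k (p-1) := by
  have expand : Vsum m (k+1) p
      = (Nat.factorial p : ℝ) + ∑ j ∈ range (k+1),
        (-1 : ℝ)^(j+1) * (Nat.factorial (j+1)) * (Nat.choose m (j+1)) *
          (Nat.choose (k+1) (j+1)) * (Nat.factorial (p - (j+1))) := by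
    rw [Vsum, Finset.sum_range_succ']
    simp [add_comm]
  have split : ∀ j, (-1 : ℝ)^(j+1) * (Nat.factorial (j+1)) * (Nat.choose m (j+1)) *
          (Nat.choose (k+1) (j+1)) * (Nat.factorial (p - (j+1)))
      = (-1 : ℝ)^(j+1) * (Nat.factorial (j+1)) * (Nat.choose m (j+1)) *
          (Nat.choose k (j+1)) * (Nat.factorial (p - (j+1)))
        + (-1 : ℝ)^(j+1) * (Nat.factorial (j+1)) * (Nat.choose m (j+1)) *
          (Nat.choose k j) * (Nat.factorial (p - (j+1))) := by
    intro j
    rw [Nat.choose_succ_succ]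
    push_cast
    ring
  rw [expand, Finset.sum_congr rfl (fun j _ => split j), Finset.sum_add_distrib]
  have first : (Nat.factorial p : ℝ) + ∑ j ∈ range (k+1),
      (-1 : ℝ)^(j+1) * (Nat.factorial (j+1)) * (Nat.choose m (j+1)) *
        (Nat.choose k (j+1)) * (Nat.factorial (p - (j+1))) = Vsum m k p := by
    rw [Finset.sum_range_succ, Nat.choose_succ_self, Vsum, Finset.sum_range_succ']
    simp [add_comm]
  have second : ∑ j ∈ range (k+1),
      (-1 : ℝ)^(j+1) * (Nat.factorial (j+1)) * (Nat.choose m (j+1)) *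
        (Nat.choose k j) * (Nat.factorial (p - (j+1)))
      = ∑ j ∈ range (k+1),
        (-((-1 : ℝ)^j * (Nat.factorial j) * (Nat.choose m j) * (Nat.choose k j) *
            (Nat.factorial (p - j)))
          + ((p:ℝ) - m) * ((-1 : ℝ)^j * (Nat.factorial j) * (Nat.choose m j) *
            (Nat.choose k j) * (Nat.factorial (p - 1 - j)))) := by
    refine Finset.sum_congr rfl fun j hj => ?_
    have hjk : j ≤ k := Nat.lt_succ_iff.mp (Finset.mem_range.mp hj)
    have hpj : p - (j+1) = p - 1 - j := by omega
    rw [hpj]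
    rcases lt_or_ge j p with hjp | hjp
    · have hfc := fact_choose_succ m j
      have hpf : ((Nat.factorial (p - j) : ℝ)) = ((p:ℝ) - j) * (Nat.factorial (p - 1 - j)) := by
        have h1 : p - j = (p - 1 - j) + 1 := by omega
        rw [h1, Nat.factorial_succ]
        have h2 : ((p - 1 - j + 1 : ℕ) : ℝ) = (p:ℝ) - j := by
          have h3 : (p - 1 - j + 1 : ℕ) = p - j := by omega
          rw [h3, Nat.cast_sub hjp.le]
        push_cast
        push_cast at h2
        rw [h2]
      linear_combination ((-1:ℝ)^(j+1) * (Nat.choose k j) * (Nat.factorial (p-1-j))) * hfc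
        + ((-1:ℝ)^j * (Nat.factorial j) * (Nat.choose m j) * (Nat.choose k j)) * hpf
    · have hmj : m < j := by
        rcases eq_or_lt_of_le (hmp.trans hjp) with rfl | h
        · rcases hk with h | h <;> omega
        · exact h
      simp [Nat.choose_eq_zero_of_lt hmj, Nat.choose_eq_zero_of_lt (Nat.lt_succ_of_lt hmj)]
  rw [← add_assoc, first, second, Finset.sum_add_distrib, ← Finset.mul_sum]
  have hneg : ∑ j ∈ range (k+1),
      (-((-1 : ℝ)^j * (Nat.factorial j) * (Nat.choose m j) * (Nat.choose k j) *
          (Nat.factorial (p - j)))) = - Vsum m k p := by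
    rw [Vsum]
    exact Finset.sum_neg_distrib _
  have hV : ∑ j ∈ range (k+1),
      (-1 : ℝ)^j * (Nat.factorial j) * (Nat.choose m j) * (Nat.choose k j) *
        (Nat.factorial (p - 1 - j)) = Vsum m k (p-1) := rfl
  rw [hneg, hV]
  ring

lemma Vsum_descent (m : ℕ) : ∀ (j k l : ℕ), j ≤ k → j ≤ l →
    Vsum m k (m+l) = (∏ s ∈ range j, ((l:ℝ) - s)) * Vsum m (k-j) (m+(l-j)) := by
  intro j
  induction j with
  | zero => intro k l _ _; simp
  | succ j ih =>
    intro k l hjk hjl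
    obtain ⟨k', rfl⟩ : ∃ k', k = k'+1 := ⟨k-1, by omega⟩
    have hrec := Vsum_rec m k' (m+l) (by omega) (Or.inr (by omega))
    have h1 : m + l - 1 = m + (l-1) := by omega
    have h2 : ((m+l : ℕ):ℝ) - m = (l:ℝ) := by push_cast; ring
    rw [hrec, h1, h2, ih k' (l-1) (by omega) (by omega)]
    have h3 : (∏ s ∈ range j, (((l-1:ℕ):ℝ) - (s:ℝ))) = ∏ s ∈ range j, ((l:ℝ) - ((s:ℝ)+1)) := by
      refine Finset.prod_congr rfl fun s _ => ?_
      rw [Nat.cast_sub (by omega : 1 ≤ l)]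
      push_cast; ring
    rw [h3, Finset.prod_range_succ']
    have h4 : k' + 1 - (j+1) = k' - j := by omega
    have h5 : l - (j+1) = (l-1) - j := by omega
    rw [h4, h5]
    push_cast
    ring

lemma prod_desc (l k : ℕ) (hkl : k ≤ l) :
    (∏ s ∈ range k, ((l:ℝ) - s)) = (Nat.choose l k : ℝ) * (Nat.factorial k) := by
  have h : (∏ s ∈ range k, ((l:ℝ) - s)) = ((l.descFactorial k : ℕ) : ℝ) := by
    clear hkl
    induction k with
    | zero => simp
    | succ k ih =>
      rcases le_or_gt (k+1) l with hkl | hkl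
      · rw [Finset.prod_range_succ, ih, Nat.descFactorial_succ]
        rw [Nat.cast_mul, Nat.cast_sub (by omega : k ≤ l)]
        ring
      · rw [Finset.prod_range_succ]
        rcases Nat.lt_or_ge l (k+1) with h' | h'
        · rw [Nat.descFactorial_eq_zero_iff_lt.mpr hkl]
          rcases Nat.lt_or_ge l k with h'' | h''
          · rw [Nat.descFactorial_eq_zero_iff_lt.mpr h''] at ih
            rw [ih]; simp
          · have : l = k := by omega
            subst this
            simp
        · omega
  rw [h, Nat.descFactorial_eq_factorial_mul_choose]
  push_cast; ring

lemma Vsum_val (m l k : ℕ) (hkl : k ≤ l) :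
    Vsum m k (m+l) = ((Nat.choose l k : ℝ) * (Nat.factorial k)) * (Nat.factorial (m+l-k)) := by
  rw [Vsum_descent m k k l le_rfl hkl, Nat.sub_self, Vsum_zero, prod_desc l k hkl]
  rw [show m + (l-k) = m+l-k from by omega]

lemma Vsum_val_zero (m l k : ℕ) (hlk : l < k) (hk : k ≤ l + m) : Vsum m k (m+l) = 0 := by
  rw [Vsum_descent m l k l (by omega) le_rfl, Nat.sub_self]
  have h0 : k - l = (k-l-1) + 1 := by omega
  rw [show m + 0 = m from rfl, h0, Vsum_rec m (k-l-1) m le_rfl (Or.inl (by omega))]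
  simp

lemma obreshkov_key (l m : ℕ) (k : ℕ) (hk : k ≤ l + m) :
    ∑ i ∈ range (k+1), (-1:ℝ)^i * obreshkovAlpha i l m * ((Nat.factorial (k-i) : ℝ))⁻¹
      = obreshkovAlpha k m l := by
  have hml : (Nat.factorial (m+l) : ℝ) ≠ 0 := Nat.cast_ne_zero.mpr (Nat.factorial_ne_zero _)
  have hkf : (Nat.factorial k : ℝ) ≠ 0 := Nat.cast_ne_zero.mpr (Nat.factorial_ne_zero _)
  have key2 : (∑ i ∈ range (k+1),
      (-1:ℝ)^i * obreshkovAlpha i l m * ((Nat.factorial (k-i) : ℝ))⁻¹)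
        * ((Nat.factorial (m+l) : ℝ) * (Nat.factorial k)) = Vsum m k (m+l) := by
    rw [Finset.sum_mul, Vsum]
    refine Finset.sum_congr rfl fun i hi => ?_
    have hik : i ≤ k := Nat.lt_succ_iff.mp (Finset.mem_range.mp hi)
    have hfact : ((Nat.factorial k : ℕ) : ℝ)
        = (Nat.choose k i : ℝ) * (Nat.factorial i) * (Nat.factorial (k-i)) := by
      exact_mod_cast congrArg (Nat.cast : ℕ → ℝ) (Nat.choose_mul_factorial_mul_factorial hik).symm
    have hkim : ((Nat.factorial (k-i):ℝ)) ≠ 0 := Nat.cast_ne_zero.mpr (Nat.factorial_ne_zero _)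
    rw [obreshkovAlpha, hfact]
    field_simp
  have key3 : obreshkovAlpha k m l * ((Nat.factorial (m+l) : ℝ) * (Nat.factorial k))
      = Vsum m k (m+l) := by
    rw [obreshkovAlpha]
    rcases le_or_gt k l with hkl | hkl
    · rw [Vsum_val m l k hkl]
      rw [show l + m = m + l from by omega]
      field_simp
    · rw [Vsum_val_zero m l k hkl hk, Nat.choose_eq_zero_of_lt hkl]
      simp
  have := key2.trans key3.symm
  have hne : ((Nat.factorial (m+l) : ℝ) * (Nat.factorial k)) ≠ 0 := mul_ne_zero hml hkf
  exact mul_right_cancel₀ hne this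

open Finset Asymptotics

section Analysis
variable {E : Type*} [NormedAddCommGroup E] [NormedSpace ℝ E]

lemma contDiff_top_iteratedDeriv {f : ℝ → E} (hf : ContDiff ℝ (⊤:ℕ∞) f) (k : ℕ) :
    ContDiff ℝ (⊤:ℕ∞) (iteratedDeriv k f) := by
  rw [iteratedDeriv_eq_iterate]; exact hf.iterate_deriv k

lemma iteratedDeriv_iteratedDeriv {f : ℝ → E} (i j : ℕ) :
    iteratedDeriv j (iteratedDeriv i f) = iteratedDeriv (i+j) f := by
  simp only [iteratedDeriv_eq_iterate]
  rw [add_comm, Function.iterate_add_apply]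

lemma iteratedDerivWithin_eq_top {f : ℝ → E} (hf : ContDiff ℝ (⊤:ℕ∞) f) {s : Set ℝ}
    (hs : UniqueDiffOn ℝ s) (k : ℕ) :
    ∀ x ∈ s, iteratedDerivWithin k f s x = iteratedDeriv k f x := by
  induction k with
  | zero => intro x _; simp
  | succ k ih =>
    intro x hx
    rw [iteratedDerivWithin_succ, iteratedDeriv_succ,
      derivWithin_congr (fun y hy => ih y hy) (ih x hx)]
    exact ((contDiff_top_iteratedDeriv hf k).differentiable (by simp) x).derivWithin
      (hs x hx)

lemma taylor_isBigO {f : ℝ → E} (hf : ContDiff ℝ (⊤:ℕ∞) f) (t : ℝ) (d : ℕ) :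
    (fun h : ℝ => f (t+h) - ∑ k ∈ range (d+1),
        (((Nat.factorial k : ℝ))⁻¹ * h^k) • iteratedDeriv k f t)
      =O[nhdsWithin 0 (Set.Ioi 0)] fun h => h^(d+1) := by
  have hcd : ContDiffOn ℝ (d+1) f (Set.Icc t (t+1)) := by
    apply ContDiff.contDiffOn
    exact hf.of_le (by exact_mod_cast le_top)
  obtain ⟨C, hC⟩ := exists_taylor_mean_remainder_bound (show t ≤ t+1 by linarith) hcd
  rw [Asymptotics.isBigO_iff]
  refine ⟨|C|, ?_⟩
  filter_upwards [Ioc_mem_nhdsGT (one_pos : (0:ℝ) < 1)]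
    with h hh
  have hx : t + h ∈ Set.Icc t (t+1) := ⟨by linarith [hh.1], by linarith [hh.2]⟩
  have hCb := hC (t+h) hx
  rw [taylor_within_apply] at hCb
  have hsum : ∑ k ∈ range (d+1), (((Nat.factorial k:ℝ))⁻¹ * (t+h-t)^k) •
      iteratedDerivWithin k f (Set.Icc t (t+1)) t
      = ∑ k ∈ range (d+1), (((Nat.factorial k:ℝ))⁻¹ * h^k) • iteratedDeriv k f t := by
    refine Finset.sum_congr rfl fun k _ => ?_
    rw [iteratedDerivWithin_eq_top hf (uniqueDiffOn_Icc (by linarith)) k t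
      (Set.left_mem_Icc.mpr (by linarith))]
    rw [show t + h - t = h by ring]
  rw [hsum] at hCb
  rw [show t + h - t = h by ring] at hCb
  calc ‖f (t+h) - ∑ k ∈ range (d+1), (((Nat.factorial k:ℝ))⁻¹ * h^k) • iteratedDeriv k f t‖
      ≤ C * h^(d+1) := hCb
    _ ≤ |C| * ‖h^(d+1)‖ := by
        have h1 : (0:ℝ) ≤ h^(d+1) := le_of_lt (pow_pos hh.1 _)
        rw [Real.norm_eq_abs, abs_of_nonneg h1]
        exact mul_le_mul_of_nonneg_right (le_abs_self C) h1

end Analysis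

lemma obreshkovAlpha_eq_zero {i l m : ℕ} (h : m < i) : obreshkovAlpha i l m = 0 := by
  simp [obreshkovAlpha, Nat.choose_eq_zero_of_lt h]

lemma obreshkov_poly {E : Type*} [NormedAddCommGroup E] [NormedSpace ℝ E]
    (l m : ℕ) (X : ℕ → E) (h : ℝ) :
    ∑ i ∈ range (m+1), ((-1:ℝ)^i * obreshkovAlpha i l m * h^i) •
        (∑ j ∈ range (l+m+1-i), (((Nat.factorial j : ℝ))⁻¹ * h^j) • X (i+j))
      = ∑ i ∈ range (l+1), (obreshkovAlpha i m l * h^i) • X i := by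
  have step1 : ∀ i, ((-1:ℝ)^i * obreshkovAlpha i l m * h^i) •
        (∑ j ∈ range (l+m+1-i), (((Nat.factorial j:ℝ))⁻¹ * h^j) • X (i+j))
      = ∑ j ∈ range (l+m+1-i),
          ((-1:ℝ)^i * obreshkovAlpha i l m * ((Nat.factorial j:ℝ))⁻¹ * (h^i * h^j)) • X (i+j) := by
    intro i
    rw [Finset.smul_sum]
    refine Finset.sum_congr rfl fun j _ => ?_
    rw [smul_smul]
    congr 1
    ring
  rw [Finset.sum_congr rfl (fun i _ => step1 i)]
  have hext : ∑ i ∈ range (m+1), ∑ j ∈ range (l+m+1-i),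
        ((-1:ℝ)^i * obreshkovAlpha i l m * ((Nat.factorial j:ℝ))⁻¹ * (h^i * h^j)) • X (i+j)
      = ∑ i ∈ range (l+m+1), ∑ j ∈ range (l+m+1-i),
        ((-1:ℝ)^i * obreshkovAlpha i l m * ((Nat.factorial j:ℝ))⁻¹ * (h^i * h^j)) • X (i+j) := by
    refine Finset.sum_subset (Finset.range_subset_range.mpr (by omega)) fun i _ hi => ?_
    have him : m < i := by
      have := Finset.mem_range.not.mp hi
      omega
    simp [obreshkovAlpha_eq_zero him]
  rw [hext, ← Finset.sum_range_diag_flip (l+m+1) (fun i j =>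
    ((-1:ℝ)^i * obreshkovAlpha i l m * ((Nat.factorial j:ℝ))⁻¹ * (h^i * h^j)) • X (i+j))]
  have inner : ∀ k ∈ range (l+m+1),
      (∑ i ∈ range (k+1),
        ((-1:ℝ)^i * obreshkovAlpha i l m * ((Nat.factorial (k-i):ℝ))⁻¹ * (h^i * h^(k-i))) •
          X (i+(k-i)))
      = (obreshkovAlpha k m l * h^k) • X k := by
    intro k hk
    have hk' : k ≤ l + m := by
      have := Finset.mem_range.mp hk; omega
    have hterm : ∀ i ∈ range (k+1),
        ((-1:ℝ)^i * obreshkovAlpha i l m * ((Nat.factorial (k-i):ℝ))⁻¹ * (h^i * h^(k-i))) •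
          X (i+(k-i))
        = (((-1:ℝ)^i * obreshkovAlpha i l m * ((Nat.factorial (k-i):ℝ))⁻¹) * h^k) • X k := by
      intro i hi
      have hik : i ≤ k := Nat.lt_succ_iff.mp (Finset.mem_range.mp hi)
      rw [show i + (k-i) = k from by omega, ← pow_add, show i + (k-i) = k from by omega]
    rw [Finset.sum_congr rfl hterm]
    have : ∑ i ∈ range (k+1),
        (((-1:ℝ)^i * obreshkovAlpha i l m * ((Nat.factorial (k-i):ℝ))⁻¹) * h^k) • X k
        = ((∑ i ∈ range (k+1),
            (-1:ℝ)^i * obreshkovAlpha i l m * ((Nat.factorial (k-i):ℝ))⁻¹) * h^k) • X k := by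
      rw [← Finset.sum_smul, Finset.sum_mul]
    rw [this, obreshkov_key l m k hk']
  rw [Finset.sum_congr rfl inner]
  symm
  refine Finset.sum_subset (Finset.range_subset_range.mpr (by omega)) fun k _ hk => ?_
  have hlk : l < k := by
    have := Finset.mem_range.not.mp hk; omega
  have : obreshkovAlpha k m l = 0 := by
    simp [obreshkovAlpha, Nat.choose_eq_zero_of_lt hlk]
  simp [this]

open Topology

/-- Local order of convergence of the Obreshkov method with parameters `(l, m)`
for the ODE `x′ = A x + u`, assuming exact data at `t_{n−1}`: for each
`0 ≤ i ≤ m`, `hⁱ (x̂^{(i)}(h) − x^{(i)}(t_{n−1}+h)) = O(h^{l+m+1+i})`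
as `h → 0⁺`. -/
theorem obreshkov_ode_order (l m : ℕ) (hm : 1 ≤ m) {n : ℕ}
    (A : Matrix (Fin n) (Fin n) ℝ)
    (u : ℝ → Fin n → ℝ) (hu : ContDiff ℝ (⊤ : ℕ∞) u)
    (x : ℝ → Fin n → ℝ) (hx : ContDiff ℝ (⊤ : ℕ∞) x)
    (hode : ∀ t : ℝ, deriv x t = A.mulVec (x t) + u t)
    (tn : ℝ)
    (xhat : ℕ → ℝ → Fin n → ℝ)
    (hchain : ∀ h : ℝ, 0 < h → ∀ i < m,
      xhat (i + 1) h = A.mulVec (xhat i h) + iteratedDeriv i u (tn + h))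
    (hclosure : ∀ h : ℝ, 0 < h →
      ∑ i ∈ Finset.range (m + 1),
        ((-1 : ℝ) ^ i * obreshkovAlpha i l m * h ^ i) • xhat i h =
      ∑ i ∈ Finset.range (l + 1),
        (obreshkovAlpha i m l * h ^ i) • iteratedDeriv i x tn) :
    ∀ i ≤ m,
      Asymptotics.IsBigO (nhdsWithin (0 : ℝ) (Set.Ioi 0))
        (fun h : ℝ => (h ^ i) • (xhat i h - iteratedDeriv i x (tn + h)))
        (fun h : ℝ => h ^ (l + m + 1 + i)) := by
  classical
  set L : (Fin n → ℝ) →L[ℝ] (Fin n → ℝ) := LinearMap.toContinuousLinearMap (Matrix.mulVecLin A)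
    with hLdef
  have hL : ∀ v, L v = A.mulVec v := fun v => rfl
  have hxs : ∀ i, ContDiff ℝ (⊤:ℕ∞) (iteratedDeriv i x) := contDiff_top_iteratedDeriv hx
  have hus : ∀ i, ContDiff ℝ (⊤:ℕ∞) (iteratedDeriv i u) := contDiff_top_iteratedDeriv hu
  have hder : ∀ i, iteratedDeriv (i+1) x
      = fun t => A.mulVec (iteratedDeriv i x t) + iteratedDeriv i u t := by
    intro i
    induction i with
    | zero =>
      funext t
      simp only [zero_add, iteratedDeriv_one, iteratedDeriv_zero]
      exact hode t
    | succ i ih =>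
      funext t
      have hg : HasDerivAt (iteratedDeriv i x) (iteratedDeriv (i+1) x t) t := by
        rw [iteratedDeriv_succ]
        exact (((hxs i).differentiable (by simp)) t).hasDerivAt
      have hv : HasDerivAt (iteratedDeriv i u) (iteratedDeriv (i+1) u t) t := by
        rw [iteratedDeriv_succ]
        exact (((hus i).differentiable (by simp)) t).hasDerivAt
      have hgL : HasDerivAt (fun s => L (iteratedDeriv i x s)) (L (iteratedDeriv (i+1) x t)) t :=
        L.hasFDerivAt.comp_hasDerivAt t hg
      have hsum := (hgL.add hv).deriv
      simp only [hL] at hsum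
      calc iteratedDeriv (i+1+1) x t = deriv (iteratedDeriv (i+1) x) t := by
            rw [iteratedDeriv_succ]
        _ = deriv (fun s => A.mulVec (iteratedDeriv i x s) + iteratedDeriv i u s) t := by
            rw [ih]
        _ = A.mulVec (iteratedDeriv (i+1) x t) + iteratedDeriv (i+1) u t := hsum
  set E0 : ℝ → Fin n → ℝ := fun h => xhat 0 h - x (tn + h) with hE0def
  have hxh : ∀ h, 0 < h → ∀ i, i ≤ m →
      xhat i h = iteratedDeriv i x (tn+h) + (L^i) (E0 h) := by
    intro h hh i
    induction i with
    | zero =>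
      intro _
      simp only [pow_zero, ContinuousLinearMap.one_apply, iteratedDeriv_zero, hE0def]
      abel
    | succ i ih =>
      intro hi
      rw [hchain h hh i (by omega), ih (by omega)]
      simp only [hder i]
      rw [Matrix.mulVec_add]
      have hpow : A.mulVec ((L^i) (E0 h)) = (L^(i+1)) (E0 h) := by
        rw [pow_succ']
        rfl
      rw [hpow]
      abel
  set R : ℝ → Fin n → ℝ := fun h =>
    ∑ i ∈ range (l+1), (obreshkovAlpha i m l * h^i) • iteratedDeriv i x tn
    - ∑ i ∈ range (m+1), ((-1:ℝ)^i * obreshkovAlpha i l m * h^i) • iteratedDeriv i x (tn+h)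
    with hRdef
  have hR : R =O[𝓝[>] (0:ℝ)] fun h => h^(l+m+1) := by
    have heq : R = fun h : ℝ => - ∑ i ∈ range (m+1),
        ((-1:ℝ)^i * obreshkovAlpha i l m * h^i) •
          (iteratedDeriv i x (tn+h) - ∑ j ∈ range (l+m+1-i),
            (((Nat.factorial j:ℝ))⁻¹ * h^j) • iteratedDeriv (i+j) x tn) := by
      funext h
      have hpoly := obreshkov_poly l m (fun k => iteratedDeriv k x tn) h
      simp only [smul_sub, Finset.sum_sub_distrib, neg_sub, hRdef]
      rw [hpoly]
    rw [heq]
    apply Asymptotics.IsBigO.neg_left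
    apply Asymptotics.IsBigO.fun_sum
    intro i hi
    have hi' : i ≤ m := Nat.lt_succ_iff.mp (Finset.mem_range.mp hi)
    have htay := taylor_isBigO (hxs i) tn (l+m-i)
    rw [show (l+m-i)+1 = l+m+1-i from by omega] at htay
    simp only [iteratedDeriv_iteratedDeriv] at htay
    have hconst : (fun h:ℝ => (-1:ℝ)^i * obreshkovAlpha i l m * h^i)
        =O[𝓝[>] (0:ℝ)] fun h:ℝ => h^i :=
      Asymptotics.IsBigO.const_mul_left (Asymptotics.isBigO_refl _ _) _
    have hcomb := hconst.smul htay
    have hfun : (fun h:ℝ => h^i • h^(l+m+1-i)) = fun h:ℝ => h^(l+m+1) := by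
      funext h
      rw [smul_eq_mul, ← pow_add]
      congr 1
      omega
    rw [hfun] at hcomb
    exact hcomb
  have hcl : ∀ h : ℝ, 0 < h →
      (∑ i ∈ range (m+1), ((-1:ℝ)^i * obreshkovAlpha i l m * h^i) • (L^i)) (E0 h) = R h := by
    intro h hh
    have h1 := hclosure h hh
    have h2 : ∑ i ∈ range (m+1), ((-1:ℝ)^i * obreshkovAlpha i l m * h^i) • xhat i h
        = ∑ i ∈ range (m+1),
            ((-1:ℝ)^i * obreshkovAlpha i l m * h^i) • iteratedDeriv i x (tn+h)
          + ∑ i ∈ range (m+1),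
            ((-1:ℝ)^i * obreshkovAlpha i l m * h^i) • ((L^i) (E0 h)) := by
      rw [← Finset.sum_add_distrib]
      refine Finset.sum_congr rfl fun i hi => ?_
      rw [hxh h hh i (Nat.lt_succ_iff.mp (Finset.mem_range.mp hi)), smul_add]
    rw [h2] at h1
    have h3 : (∑ i ∈ range (m+1), ((-1:ℝ)^i * obreshkovAlpha i l m * h^i) • (L^i)) (E0 h)
        = ∑ i ∈ range (m+1), ((-1:ℝ)^i * obreshkovAlpha i l m * h^i) • ((L^i) (E0 h)) := by
      simp [ContinuousLinearMap.sum_apply]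
    rw [h3, hRdef]
    exact eq_sub_of_add_eq' h1
  set Nh : ℝ → ((Fin n → ℝ) →L[ℝ] (Fin n → ℝ)) := fun h =>
    ∑ i ∈ range m, ((-1:ℝ)^(i+1) * obreshkovAlpha (i+1) l m * h^(i+1)) • (L^(i+1)) with hNdef
  have hsplit : ∀ h : ℝ,
      (∑ i ∈ range (m+1), ((-1:ℝ)^i * obreshkovAlpha i l m * h^i) • (L^i)) = 1 + Nh h := by
    intro h
    rw [Finset.sum_range_succ']
    have hA0 : obreshkovAlpha 0 l m = 1 := by
      simp [obreshkovAlpha, div_self (Nat.cast_ne_zero.mpr (Nat.factorial_ne_zero (m+l)) : ((Nat.factorial (m+l):ℝ)) ≠ 0)]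
    rw [hNdef]
    simp [hA0]
    exact add_comm _ _
  set K : ℝ := ∑ i ∈ range m, |obreshkovAlpha (i+1) l m| * ‖L^(i+1)‖ with hKdef
  have hK0 : 0 ≤ K :=
    Finset.sum_nonneg fun i _ => mul_nonneg (abs_nonneg _) (norm_nonneg _)
  set h₀ : ℝ := min 1 (1/(2*(K+1))) with hh₀def
  have hh₀pos : 0 < h₀ := lt_min one_pos (by positivity)
  have hbound : ∀ h ∈ Set.Ioc (0:ℝ) h₀, ‖E0 h‖ ≤ 2 * ‖R h‖ := by
    intro h hh
    have hh1 : h ≤ 1 := le_trans hh.2 (min_le_left _ _)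
    have hNnorm : ‖Nh h‖ ≤ K * h := by
      rw [hNdef]
      calc ‖∑ i ∈ range m, ((-1:ℝ)^(i+1) * obreshkovAlpha (i+1) l m * h^(i+1)) • (L^(i+1))‖
          ≤ ∑ i ∈ range m, ‖((-1:ℝ)^(i+1) * obreshkovAlpha (i+1) l m * h^(i+1)) • (L^(i+1))‖ :=
            norm_sum_le _ _
        _ ≤ ∑ i ∈ range m, (|obreshkovAlpha (i+1) l m| * ‖L^(i+1)‖) * h := by
            refine Finset.sum_le_sum fun i _ => ?_
            refine le_trans (ContinuousLinearMap.opNorm_smul_le _ _) ?_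
            rw [Real.norm_eq_abs, abs_mul, abs_mul, abs_pow, abs_neg, abs_one,
              one_pow, one_mul, abs_pow, abs_of_pos hh.1]
            have hple : h^(i+1) ≤ h := by
              calc h^(i+1) ≤ h^1 := pow_le_pow_of_le_one (le_of_lt hh.1) hh1 (by omega)
                _ = h := pow_one h
            calc |obreshkovAlpha (i+1) l m| * h^(i+1) * ‖L^(i+1)‖
                ≤ |obreshkovAlpha (i+1) l m| * h * ‖L^(i+1)‖ := by
                  refine mul_le_mul_of_nonneg_right ?_ (norm_nonneg _)
                  exact mul_le_mul_of_nonneg_left hple (abs_nonneg _)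
              _ = (|obreshkovAlpha (i+1) l m| * ‖L^(i+1)‖) * h := by ring
        _ = K * h := by rw [hKdef, Finset.sum_mul]
    have hNh2 : ‖Nh h‖ ≤ 1/2 := by
      have hhh : h ≤ 1/(2*(K+1)) := le_trans hh.2 (min_le_right _ _)
      have hKh : K * h ≤ 1/2 := by
        have h1 : K * h ≤ K * (1/(2*(K+1))) := mul_le_mul_of_nonneg_left hhh hK0
        have h2 : K * (1/(2*(K+1))) ≤ 1/2 := by
          rw [mul_one_div, div_le_div_iff₀ (by positivity) (by norm_num : (0:ℝ) < 2)]
          nlinarith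
        linarith
      linarith [hNnorm]
    have hEeq : E0 h = R h - Nh h (E0 h) := by
      have h1 := hcl h hh.1
      rw [hsplit h] at h1
      simp only [ContinuousLinearMap.add_apply, ContinuousLinearMap.one_apply] at h1
      exact eq_sub_of_add_eq h1
    have hn : ‖Nh h (E0 h)‖ ≤ (1/2) * ‖E0 h‖ :=
      le_trans ((Nh h).le_opNorm _) (mul_le_mul_of_nonneg_right hNh2 (norm_nonneg _))
    have hfin : ‖E0 h‖ ≤ ‖R h‖ + (1/2) * ‖E0 h‖ := by
      calc ‖E0 h‖ = ‖R h - Nh h (E0 h)‖ := congrArg norm hEeq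
        _ ≤ ‖R h‖ + ‖Nh h (E0 h)‖ := norm_sub_le _ _
        _ ≤ ‖R h‖ + (1/2) * ‖E0 h‖ := by linarith
    linarith
  have hE0R : E0 =O[𝓝[>] (0:ℝ)] R := by
    rw [Asymptotics.isBigO_iff]
    refine ⟨2, ?_⟩
    filter_upwards [Ioc_mem_nhdsGT hh₀pos]
      with h hh
    exact hbound h hh
  have hE0 : E0 =O[𝓝[>] (0:ℝ)] fun h => h^(l+m+1) := hE0R.trans hR
  intro i hi
  have hcomp : (fun h:ℝ => (L^i) ((h^i : ℝ) • E0 h)) =O[𝓝[>] (0:ℝ)]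
      fun h => (h^i : ℝ) • E0 h := ContinuousLinearMap.isBigO_comp _ _ _
  have hsm : (fun h:ℝ => (h^i:ℝ) • E0 h) =O[𝓝[>] (0:ℝ)] fun h => h^(l+m+1+i) := by
    have h1 := (Asymptotics.isBigO_refl (fun h:ℝ => h^i) (𝓝[>] (0:ℝ))).smul hE0
    have h2 : (fun h:ℝ => h^i • h^(l+m+1)) = fun h:ℝ => h^(l+m+1+i) := by
      funext h
      rw [smul_eq_mul, ← pow_add]
      congr 1
      omega
    rwa [h2] at h1
  refine ((hcomp.trans hsm).congr' ?_ Filter.EventuallyEq.rfl)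
  filter_upwards [self_mem_nhdsWithin] with h hh
  rw [hxh h hh i hi, map_smul]
  congr 1
  rw [add_sub_cancel_left]
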